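/- Let c_p = ∫₀¹ (1 − σ^{p+1})^{−1/2} dσ. For every rising radial arc (u, a, τ) with slope α > 0, one has u(τ) ≤ ( c_p·√(Λ(p+1)/2) / (τ − a) )^{2/(p−1)}. -/

import Mathlib

open Real Set MeasureTheory

/-- `P⁺[u](r)`: the Pucci maximal operator `𝓜⁺_{λ,Λ}` evaluated on the Hessian of the
radial function `v(x) = u(|x|)`, expressed through `u'` and `u''`. -/
noncomputable def Pp (n : ℕ) (lam Lam : ℝ) (u' u'' : ℝ → ℝ) (r : ℝ) : ℝ :=
  Lam * max (u'' r) 0 + lam * min (u'' r) 0 +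
    ((n : ℝ) - 1) * (Lam * max (u' r / r) 0 + lam * min (u' r / r) 0)

/-- `P⁻[u](r)`: the Pucci minimal operator `𝓜⁻_{λ,Λ}` evaluated on the Hessian of the
radial function `v(x) = u(|x|)`. -/
noncomputable def Pm (n : ℕ) (lam Lam : ℝ) (u' u'' : ℝ → ℝ) (r : ℝ) : ℝ :=
  lam * max (u'' r) 0 + Lam * min (u'' r) 0 +
    ((n : ℝ) - 1) * (lam * max (u' r / r) 0 + Lam * min (u' r / r) 0)

/-- `u` satisfies the Pucci differential inequalities at `r`:
`−P⁺[u](r) ≤ |u(r)|^{p−1}u(r) ≤ −P⁻[u](r)`. -/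
def PucciIneq (n : ℕ) (lam Lam p : ℝ) (u u' u'' : ℝ → ℝ) (r : ℝ) : Prop :=
  -Pp n lam Lam u' u'' r ≤ |u r| ^ (p - 1) * u r ∧
    |u r| ^ (p - 1) * u r ≤ -Pm n lam Lam u' u'' r

/-- A rising radial arc with slope `α`: `u ∈ C²([a,τ])`, `u(a) = 0`, `u'(a) = α > 0`,
`u > 0` on `(a,τ]`, `u' > 0` on `[a,τ)`, `u'(τ) = 0`, and `u` satisfies the Pucci
differential inequalities on `(a,τ)`. -/
def RisingArc (n : ℕ) (lam Lam p : ℝ) (u u' u'' : ℝ → ℝ) (a τ α : ℝ) : Prop :=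
  0 < a ∧ a < τ ∧ 0 < α ∧
  (∀ r ∈ Set.Icc a τ, HasDerivAt u (u' r) r) ∧
  (∀ r ∈ Set.Icc a τ, HasDerivAt u' (u'' r) r) ∧
  ContinuousOn u'' (Set.Icc a τ) ∧
  u a = 0 ∧ u' a = α ∧
  (∀ r ∈ Set.Ioc a τ, 0 < u r) ∧
  (∀ r ∈ Set.Ico a τ, 0 < u' r) ∧
  u' τ = 0 ∧
  (∀ r ∈ Set.Ioo a τ, PucciIneq n lam Lam p u u' u'' r)

/-- The constant `c_p = ∫₀¹ (1 − σ^{p+1})^{−1/2} dσ`. -/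
noncomputable def cP (p : ℝ) : ℝ := ∫ σ in (0 : ℝ)..1, (1 - σ ^ (p + 1)) ^ (-(1 / 2) : ℝ)

/-- The integrand of `cP` is nonnegative on `[0,1]`. -/
lemma cP_integrand_nonneg {p : ℝ} (hp : 1 < p) {σ : ℝ} (h0 : 0 ≤ σ) (h1 : σ ≤ 1) :
    0 ≤ (1 - σ ^ (p + 1)) ^ (-(1 / 2) : ℝ) := by
  apply Real.rpow_nonneg
  have : σ ^ (p + 1) ≤ 1 := Real.rpow_le_one h0 h1 (by linarith)
  linarith

lemma cP_integrand_measurable (p : ℝ) :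
    Measurable (fun σ : ℝ => (1 - σ ^ (p + 1)) ^ (-(1 / 2) : ℝ)) := by fun_prop

lemma cP_integrand_integrable {p : ℝ} (hp : 1 < p) :
    IntervalIntegrable (fun σ : ℝ => (1 - σ ^ (p + 1)) ^ (-(1 / 2) : ℝ)) volume 0 1 := by
  have hg0 : IntervalIntegrable (fun x : ℝ => x ^ (-(1 / 2) : ℝ)) volume 0 1 :=
    intervalIntegral.intervalIntegrable_rpow' (by norm_num)
  have hg : IntervalIntegrable (fun σ : ℝ => (1 - σ) ^ (-(1 / 2) : ℝ)) volume 0 1 := by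
    have := (hg0.comp_sub_left 1).symm
    simpa using this
  have hmeas := cP_integrand_measurable p
  rw [intervalIntegrable_iff_integrableOn_Ioc_of_le zero_le_one] at hg ⊢
  refine MeasureTheory.Integrable.mono hg hmeas.aestronglyMeasurable ?_
  filter_upwards [ae_restrict_mem measurableSet_Ioc] with σ hσ
  obtain ⟨hσ0, hσ1⟩ := hσ
  have hle : σ ^ (p + 1) ≤ σ := by
    calc σ ^ (p + 1) ≤ σ ^ (1 : ℝ) :=
          Real.rpow_le_rpow_of_exponent_ge hσ0 hσ1 (by linarith)
    _ = σ := Real.rpow_one σ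
  have h1 : 0 ≤ 1 - σ := by linarith
  have h2 : 1 - σ ≤ 1 - σ ^ (p + 1) := by linarith
  rw [Real.norm_eq_abs, Real.norm_eq_abs,
    abs_of_nonneg (cP_integrand_nonneg hp hσ0.le hσ1),
    abs_of_nonneg (Real.rpow_nonneg h1 _)]
  rcases eq_or_lt_of_le h1 with h | h
  · have : 1 - σ ^ (p + 1) = 0 := by
      have hσ' : σ = 1 := by linarith
      simp [hσ']
    rw [this, ← h]
  · exact Real.rpow_le_rpow_of_nonpos h h2 (by norm_num)

/-- Estimate (2.11) in the paper:
`u(τ) ≤ (c_p √(Λ(p+1)/2) / (τ−a))^{2/(p−1)}` for any rising radial arc. -/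
theorem rising_arc_peak_pointwise_upper_bound
    (n : ℕ) (hn : 2 ≤ n) (lam Lam p : ℝ) (hlam : 0 < lam) (hlL : lam ≤ Lam) (hp : 1 < p)
    (a τ α : ℝ) (u u' u'' : ℝ → ℝ)
    (harc : RisingArc n lam Lam p u u' u'' a τ α) :
    u τ ≤ (cP p * Real.sqrt (Lam * (p + 1) / 2) / (τ - a)) ^ (2 / (p - 1)) := by
  obtain ⟨ha, haτ, hα, hu, hu', hu''c, hua, hu'a, hupos, hu'pos, hu'τ, hP⟩ := harc
  set M := u τ with hMdef
  have hM : 0 < M := hupos τ ⟨haτ, le_refl τ⟩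
  have hucont : ContinuousOn u (Icc a τ) := fun r hr => (hu r hr).continuousAt.continuousWithinAt
  have hu'cont : ContinuousOn u' (Icc a τ) := fun r hr => (hu' r hr).continuousAt.continuousWithinAt
  have hp1 : (0 : ℝ) < p + 1 := by linarith
  have hτa : 0 < τ - a := by linarith
  have hLam : 0 < Lam := lt_of_lt_of_le hlam hlL
  -- Step A: the pointwise differential inequality
  have hA : ∀ r ∈ Ioo a τ, u r ^ p + Lam * u'' r ≤ 0 := by
    intro r hr
    have hur : 0 < u r := hupos r ⟨hr.1, hr.2.le⟩
    have hu'r : 0 < u' r := hu'pos r ⟨hr.1.le, hr.2⟩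
    have hrpos : 0 < r := lt_trans ha hr.1
    have hq := (hP r hr).2
    have hpow : |u r| ^ (p - 1) * u r = u r ^ p := by
      rw [abs_of_pos hur, ← Real.rpow_add_one (ne_of_gt hur) (p - 1)]
      norm_num
    rw [hpow] at hq
    have hdpos : 0 < u' r / r := div_pos hu'r hrpos
    have hmax : max (u' r / r) 0 = u' r / r := max_eq_left hdpos.le
    have hmin : min (u' r / r) 0 = 0 := min_eq_right hdpos.le
    simp only [Pm, hmax, hmin] at hq
    have hurp : 0 < u r ^ p := Real.rpow_pos_of_pos hur p
    have hn1 : (1 : ℝ) ≤ (n : ℝ) - 1 := by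
      have : (2 : ℝ) ≤ (n : ℝ) := by exact_mod_cast hn
      linarith
    have hX : 0 < ((n : ℝ) - 1) * (lam * (u' r / r) + Lam * 0) := by
      have := mul_pos hlam hdpos
      nlinarith
    rcases le_or_gt (u'' r) 0 with h'' | h''
    · rw [max_eq_right h'', min_eq_left h''] at hq
      linarith
    · rw [max_eq_left h''.le, min_eq_right h''.le] at hq
      have h1 : 0 < lam * u'' r := mul_pos hlam h''
      linarith
  -- Step B: energy estimate
  have hE : ∀ r ∈ Icc a τ, M ^ (p + 1) - u r ^ (p + 1) ≤ Lam * (p + 1) / 2 * (u' r) ^ 2 := by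
    set E : ℝ → ℝ := fun r => u r ^ (p + 1) / (p + 1) + Lam * (u' r) ^ 2 / 2 with hEdef
    have hEderiv : ∀ r ∈ Ioo a τ,
        HasDerivAt E (u' r * (p + 1) * u r ^ p / (p + 1) +
          Lam * ((2 : ℕ) * u' r ^ (2 - 1) * u'' r) / 2) r := by
      intro r hr
      have hrI : r ∈ Icc a τ := ⟨hr.1.le, hr.2.le⟩
      have hur : 0 < u r := hupos r ⟨hr.1, hr.2.le⟩
      have h1 : HasDerivAt (fun s => u s ^ (p + 1)) (u' r * (p + 1) * u r ^ (p + 1 - 1)) r :=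
        (hu r hrI).rpow_const (Or.inl (ne_of_gt hur))
      rw [show p + 1 - 1 = p from by ring] at h1
      exact (h1.div_const (p + 1)).add (((HasDerivAt.const_mul Lam ((hu' r hrI).pow 2))).div_const 2)
    have hEcont : ContinuousOn E (Icc a τ) := by
      apply ContinuousOn.add
      · exact (hucont.rpow_const (fun r hr => Or.inr hp1.le)).div_const _
      · exact (continuousOn_const.mul (hu'cont.pow 2)).div_const 2
    have hanti : AntitoneOn E (Icc a τ) := by
      apply antitoneOn_of_deriv_nonpos (convex_Icc a τ) hEcont
      · intro r hr
        rw [interior_Icc] at hr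
        exact (hEderiv r hr).differentiableAt.differentiableWithinAt
      · intro r hr
        rw [interior_Icc] at hr
        rw [(hEderiv r hr).deriv]
        have hu'r : 0 < u' r := hu'pos r ⟨hr.1.le, hr.2⟩
        have hAr := hA r hr
        have hsimp : u' r * (p + 1) * u r ^ p / (p + 1) = u' r * u r ^ p := by
          field_simp
        rw [hsimp]
        have key := mul_le_mul_of_nonneg_left hAr hu'r.le
        simp only [pow_one, Nat.cast_ofNat]
        nlinarith [key]
    intro r hr
    have h1 : E τ ≤ E r := hanti hr (right_mem_Icc.2 haτ.le) hr.2
    have hEτ : E τ = M ^ (p + 1) / (p + 1) := by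
      simp [hEdef, hu'τ, hMdef]
    rw [hEτ] at h1
    have h2 : (M ^ (p + 1) - u r ^ (p + 1)) / (p + 1) ≤ Lam * (u' r) ^ 2 / 2 := by
      rw [sub_div]
      simp only [hEdef] at h1
      linarith
    rw [div_le_iff₀ hp1] at h2
    nlinarith [h2]
  -- Step C: monotonicity of u
  have hmono : StrictMonoOn u (Icc a τ) := by
    apply strictMonoOn_of_deriv_pos (convex_Icc a τ) hucont
    intro r hr
    rw [interior_Icc] at hr
    rw [(hu r ⟨hr.1.le, hr.2.le⟩).deriv]
    exact hu'pos r ⟨hr.1.le, hr.2⟩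
  have hunn : ∀ r ∈ Icc a τ, 0 ≤ u r := by
    intro r hr
    rcases eq_or_lt_of_le hr.1 with h | h
    · simp [← h, hua]
    · exact (hupos r ⟨h, hr.2⟩).le
  have huM : ∀ r ∈ Icc a τ, u r ≤ M :=
    fun r hr => hmono.monotoneOn hr (right_mem_Icc.2 haτ.le) hr.2
  have huMlt : ∀ r ∈ Ico a τ, u r < M :=
    fun r hr => hmono ⟨hr.1, hr.2.le⟩ (right_mem_Icc.2 haτ.le) hr.2
  -- The primitive
  set f : ℝ → ℝ := fun σ => (1 - σ ^ (p + 1)) ^ (-(1 / 2) : ℝ) with hfdef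
  have hfInt : IntervalIntegrable f volume 0 1 := cP_integrand_integrable hp
  set F : ℝ → ℝ := fun x => ∫ σ in (0 : ℝ)..x, f σ with hFdef
  set s := Real.sqrt (Lam * (p + 1) / 2) with hsdef
  have hs : 0 < s := Real.sqrt_pos.2 (by positivity)
  set K : ℝ := M ^ ((p - 1) / 2 : ℝ) / s with hKdef
  set G : ℝ → ℝ := fun r => F (u r / M) with hGdef
  have hmaps : ∀ r ∈ Icc a τ, u r / M ∈ Icc (0 : ℝ) 1 :=
    fun r hr => ⟨div_nonneg (hunn r hr) hM.le, (div_le_one hM).2 (huM r hr)⟩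
  have hIccInt : IntegrableOn f (Icc 0 1) := by
    rw [integrableOn_Icc_iff_integrableOn_Ioc]
    exact (intervalIntegrable_iff_integrableOn_Ioc_of_le zero_le_one).1 hfInt
  have hFc : ContinuousOn F (Icc 0 1) := by
    have h := intervalIntegral.continuousOn_primitive_interval
      (μ := volume) (f := f) (a := 0) (b := 1) (by rwa [uIcc_of_le zero_le_one])
    rwa [uIcc_of_le (zero_le_one : (0:ℝ) ≤ 1)] at h
  have hGc : ContinuousOn G (Icc a τ) := hFc.comp (hucont.div_const M) hmaps
  -- derivative of G with lower bound
  have hGderiv : ∀ r ∈ Ioo a τ, HasDerivAt G (f (u r / M) * (u' r / M)) r := by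
    intro r hr
    have hrI : r ∈ Icc a τ := ⟨hr.1.le, hr.2.le⟩
    have hur : 0 < u r := hupos r ⟨hr.1, hr.2.le⟩
    have hurM : u r < M := huMlt r ⟨hr.1.le, hr.2⟩
    have hx0 : 0 < u r / M := div_pos hur hM
    have hx1 : u r / M < 1 := (div_lt_one hM).2 hurM
    have hb0 : 0 < 1 - (u r / M) ^ (p + 1) := by
      have := Real.rpow_lt_one hx0.le hx1 hp1
      linarith
    have hcont : ContinuousAt f (u r / M) := by
      have h1 : ContinuousAt (fun σ : ℝ => 1 - σ ^ (p + 1)) (u r / M) :=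
        continuousAt_const.sub
          (Real.continuousAt_rpow_const (u r / M) (p + 1) (Or.inl (ne_of_gt hx0)))
      exact h1.rpow_const (Or.inl (ne_of_gt hb0))
    have hsub : IntervalIntegrable f volume 0 (u r / M) := by
      apply hfInt.mono_set
      rw [uIcc_of_le hx0.le, uIcc_of_le zero_le_one]
      exact Icc_subset_Icc le_rfl hx1.le
    have hmeasAt : StronglyMeasurableAtFilter f (nhds (u r / M)) :=
      ⟨univ, Filter.univ_mem,
        ((cP_integrand_measurable p).aestronglyMeasurable).restrict⟩
    have hF' : HasDerivAt F (f (u r / M)) (u r / M) :=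
      intervalIntegral.integral_hasDerivAt_right hsub hmeasAt hcont
    have hudiv : HasDerivAt (fun r => u r / M) (u' r / M) r := (hu r hrI).div_const M
    exact hF'.comp r hudiv
  have hKle : ∀ r ∈ Ioo a τ, K ≤ f (u r / M) * (u' r / M) := by
    intro r hr
    have hrI : r ∈ Icc a τ := ⟨hr.1.le, hr.2.le⟩
    have hur : 0 < u r := hupos r ⟨hr.1, hr.2.le⟩
    have hu'r : 0 < u' r := hu'pos r ⟨hr.1.le, hr.2⟩
    have hurM : u r < M := huMlt r ⟨hr.1.le, hr.2⟩
    have hx0 : 0 < u r / M := div_pos hur hM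
    have hx1 : u r / M < 1 := (div_lt_one hM).2 hurM
    have hb0 : 0 < 1 - (u r / M) ^ (p + 1) := by
      have := Real.rpow_lt_one hx0.le hx1 hp1
      linarith
    have hbM : (1 - (u r / M) ^ (p + 1)) * M ^ (p + 1) = M ^ (p + 1) - u r ^ (p + 1) := by
      rw [Real.div_rpow hur.le hM.le]
      have hMp : (0 : ℝ) < M ^ (p + 1) := Real.rpow_pos_of_pos hM _
      field_simp
    have hsqM : Real.sqrt (M ^ (p + 1)) = M ^ ((p + 1) / 2 : ℝ) := by
      rw [Real.sqrt_eq_rpow, ← Real.rpow_mul hM.le]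
      congr 1
      ring
    have hkey : Real.sqrt (1 - (u r / M) ^ (p + 1)) * M ^ ((p + 1) / 2 : ℝ) ≤ s * u' r := by
      have h1 : (1 - (u r / M) ^ (p + 1)) * M ^ (p + 1) ≤ (Lam * (p + 1) / 2) * u' r ^ 2 := by
        rw [hbM]; linarith [hE r hrI]
      have h2 := Real.sqrt_le_sqrt h1
      rw [Real.sqrt_mul hb0.le, Real.sqrt_mul (by positivity : (0:ℝ) ≤ Lam * (p + 1) / 2),
        Real.sqrt_sq hu'r.le, hsqM, ← hsdef] at h2
      exact h2
    have hfx : f (u r / M) = (Real.sqrt (1 - (u r / M) ^ (p + 1)))⁻¹ := by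
      simp only [hfdef]
      rw [Real.rpow_neg hb0.le, ← Real.sqrt_eq_rpow]
    rw [hfx, hKdef]
    have hq0 : 0 < Real.sqrt (1 - (u r / M) ^ (p + 1)) := Real.sqrt_pos.2 hb0
    have hMsplit : M ^ ((p + 1) / 2 : ℝ) = M ^ ((p - 1) / 2 : ℝ) * M := by
      rw [show ((p + 1) / 2 : ℝ) = (p - 1) / 2 + 1 from by ring,
        Real.rpow_add_one (ne_of_gt hM)]
    rw [hMsplit] at hkey
    rw [div_le_iff₀ hs, inv_mul_eq_div, div_mul_eq_mul_div, le_div_iff₀ hq0,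
      div_mul_eq_mul_div, le_div_iff₀ hM]
    linarith [hkey]
  -- monotone comparison
  have hKr : ∀ r : ℝ, HasDerivAt (fun x : ℝ => K * x) K r := by
    intro r
    simpa using (hasDerivAt_id r).const_mul K
  have hΦ : MonotoneOn (fun r => G r - K * r) (Icc a τ) := by
    apply monotoneOn_of_deriv_nonneg (convex_Icc a τ)
    · exact hGc.sub ((continuous_const.mul continuous_id).continuousOn)
    · intro r hr
      rw [interior_Icc] at hr
      exact ((hGderiv r hr).sub (hKr r)).differentiableAt.differentiableWithinAt
    · intro r hr
      rw [interior_Icc] at hr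
      have hd : HasDerivAt (fun r => G r - K * r) (f (u r / M) * (u' r / M) - K) r :=
        (hGderiv r hr).sub (hKr r)
      rw [hd.deriv]
      have := hKle r hr
      linarith
  have hfinal : G a - K * a ≤ G τ - K * τ :=
    hΦ (left_mem_Icc.2 haτ.le) (right_mem_Icc.2 haτ.le) haτ.le
  have hGa : G a = 0 := by
    simp only [hGdef, hua, zero_div, hFdef]
    exact intervalIntegral.integral_same
  have hGτ : G τ = cP p := by
    simp only [hGdef, div_self (ne_of_gt hM), hFdef, hfdef]
    rw [← hMdef, div_self (ne_of_gt hM)]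
    rfl
  have hKbound : K * (τ - a) ≤ cP p := by
    rw [hGa, hGτ] at hfinal
    linarith
  have hp1' : (0 : ℝ) < p - 1 := by linarith
  have hM' : M ^ ((p - 1) / 2 : ℝ) ≤ cP p * s / (τ - a) := by
    rw [hKdef, div_mul_eq_mul_div, div_le_iff₀ hs] at hKbound
    rw [le_div_iff₀ hτa]
    linarith
  have hfin := Real.rpow_le_rpow (Real.rpow_nonneg hM.le _) hM'
    (le_of_lt (div_pos two_pos hp1'))
  rw [← Real.rpow_mul hM.le] at hfin
  rw [show ((p - 1) / 2) * (2 / (p - 1)) = 1 from by field_simp, Real.rpow_one] at hfin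
  exact hfin
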